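/- Let P be a polynomial in n+1 variables with real algebraic coefficients and let r_1, …, r_n be real algebraic numbers. Then there exists T ∈ ℝ such that the function t ↦ P(t, e^{r_1 t}, …, e^{r_n t}) is either identically zero on (T, ∞), or strictly positive throughout (T, ∞), or strictly negative throughout (T, ∞). In particular, for any semi-algebraic condition given by a single polynomial sign constraint, the set {t ≥ 0 : P(t, e^{r_1 t}, …, e^{r_n t}) satisfies the constraint} either contains an interval (T, ∞) or is disjoint from such an interval. -/

import Mathlib

open Filter Real Finset
open Filter Real Finset

lemma aux_exp_tendsto (n : ℕ) (b : ℝ) (hb : b < 0) :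
    Tendsto (fun x : ℝ => x ^ n * exp (b * x)) atTop (nhds 0) := by
  have h2 : Tendsto (fun x : ℝ => -b * x) atTop atTop :=
    Tendsto.const_mul_atTop (by linarith) tendsto_id
  have h1 : Tendsto (fun y : ℝ => ((-b)⁻¹ * y) ^ n * exp (-y)) atTop (nhds 0) := by
    have := (tendsto_pow_mul_exp_neg_atTop_nhds_zero n).const_mul (((-b)⁻¹) ^ n)
    simpa only [mul_pow, mul_assoc, mul_zero] using this
  have hbne : -b ≠ 0 := by linarith
  have heq : ∀ x : ℝ, (-b)⁻¹ * (-b * x) = x := fun x => by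
    rw [← mul_assoc, inv_mul_cancel₀ hbne, one_mul]
  have key : ((fun y => ((-b)⁻¹ * y) ^ n * exp (-y)) ∘ fun x : ℝ => -b * x)
      = fun x : ℝ => x ^ n * exp (b * x) := by
    funext x
    simp only [Function.comp_apply, heq]
    rw [show -(-b * x) = b * x by ring]
  exact key ▸ h1.comp h2

lemma exp_poly_key (c : (ℝ × ℕ) →₀ ℝ) :
    ∃ T : ℝ,
      (∀ t > T, (∑ p ∈ c.support, c p * (t ^ p.2 * exp (p.1 * t))) = 0) ∨
      (∀ t > T, 0 < ∑ p ∈ c.support, c p * (t ^ p.2 * exp (p.1 * t))) ∨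
      (∀ t > T, (∑ p ∈ c.support, c p * (t ^ p.2 * exp (p.1 * t))) < 0) := by
  by_cases hc : c = 0
  · exact ⟨0, Or.inl fun t _ => by simp [hc]⟩
  have hne : c.support.Nonempty := Finsupp.support_nonempty_iff.mpr hc
  set S := c.support with hS
  have hne' : (S.image (toLex : ℝ × ℕ → ℝ ×ₗ ℕ)).Nonempty := hne.image _
  set m : ℝ × ℕ := ofLex ((S.image toLex).max' hne') with hm
  have hmS : m ∈ S := by
    rcases Finset.mem_image.mp ((S.image toLex).max'_mem hne') with ⟨p, hp, hpe⟩
    rwa [hm, ← hpe]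
  have hmax : ∀ p ∈ S, toLex p ≤ toLex m := by
    intro p hp
    have := Finset.le_max' (S.image toLex) (toLex p) (mem_image_of_mem _ hp)
    simpa [hm] using this
  have hcm : c m ≠ 0 := Finsupp.mem_support_iff.mp hmS
  have hT : Tendsto
      (fun t => ∑ p ∈ S, (c p * (t ^ p.2 * exp (p.1 * t))) / (t ^ m.2 * exp (m.1 * t)))
      atTop (nhds (c m)) := by
    have hsum : (c m) = ∑ p ∈ S, (if p = m then c m else 0) := by
      rw [Finset.sum_ite_eq' S m (fun _ => c m), if_pos hmS]
    rw [hsum]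
    refine tendsto_finset_sum _ fun p hp => ?_
    by_cases hpm : p = m
    · rw [if_pos hpm, hpm]
      apply Tendsto.congr' (f₁ := fun _ => c m)
      · filter_upwards [eventually_gt_atTop 0] with t ht
        have h1 : t ^ m.2 * exp (m.1 * t) ≠ 0 := by positivity
        field_simp
      · exact tendsto_const_nhds
    · rw [if_neg hpm]
      have hle := hmax p hp
      rw [Prod.Lex.le_iff] at hle
      rcases hle with h1 | ⟨h1, h2⟩
      · -- p.1 < m.1 : exponential decay
        set b : ℝ := p.1 - m.1 with hb
        have hbneg : b < 0 := by simp only [hb]; exact sub_neg.mpr h1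
        have hbound : Tendsto (fun t : ℝ => |c p| * (t ^ p.2 * exp (b * t))) atTop (nhds 0) := by
          simpa [mul_assoc] using (aux_exp_tendsto p.2 b hbneg).const_mul |c p|
        refine (tendsto_zero_iff_abs_tendsto_zero _).mpr ?_
        refine squeeze_zero' ?_ ?_ hbound
        · filter_upwards with t; exact abs_nonneg _
        · filter_upwards [eventually_ge_atTop 1] with t ht
          have ht0 : (0:ℝ) < t := by linarith
          have hd : (0:ℝ) < t ^ m.2 * exp (m.1 * t) := by positivity
          simp only [Function.comp_apply]
          rw [abs_div, abs_of_pos hd, div_le_iff₀ hd]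
          have h1' : |c p * (t ^ p.2 * exp (p.1 * t))| = |c p| * (t ^ p.2 * exp (p.1 * t)) := by
            rw [abs_mul, abs_of_pos (by positivity : (0:ℝ) < t ^ p.2 * exp (p.1 * t))]
          rw [h1']
          have hexp : exp (p.1 * t) = exp (b * t) * exp (m.1 * t) := by
            rw [← Real.exp_add]; congr 1; simp only [hb]; ring
          have htm : (1:ℝ) ≤ t ^ m.2 := one_le_pow₀ ht
          rw [hexp]
          calc |c p| * (t ^ p.2 * (exp (b*t) * exp (m.1*t)))
              ≤ |c p| * (t ^ p.2 * (exp (b*t) * exp (m.1*t))) * t ^ m.2 :=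
                le_mul_of_one_le_right (by positivity) htm
            _ = |c p| * (t ^ p.2 * exp (b*t)) * (t ^ m.2 * exp (m.1*t)) := by ring
      · -- same exponent, smaller power
        have h2' : p.2 < m.2 := by
          rcases lt_or_eq_of_le h2 with h | h
          · exact h
          · exact absurd (Prod.ext h1 h) hpm
        apply Tendsto.congr' (f₁ := fun t => c p / t ^ (m.2 - p.2))
        · filter_upwards [eventually_gt_atTop 0] with t ht
          rw [show p.1 = m.1 from h1]
          have hpow : t ^ m.2 = t ^ (m.2 - p.2) * t ^ p.2 := by
            rw [← pow_add]; congr 1; omega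
          rw [hpow]
          have he := exp_pos (m.1 * t)
          have ht' : t ≠ 0 := ne_of_gt ht
          field_simp
        · have h3 : Tendsto (fun t : ℝ => t ^ (m.2 - p.2)) atTop atTop :=
            tendsto_pow_atTop (by omega)
          simpa [div_eq_mul_inv] using h3.inv_tendsto_atTop.const_mul (c p)
  rcases lt_or_gt_of_ne hcm with hneg | hpos
  · refine ⟨?_, ?_⟩
    case _ => exact Classical.choose (eventually_atTop.mp
      ((hT.eventually (eventually_lt_nhds hneg)).and (eventually_gt_atTop 0)))
    right; right
    intro t ht
    have hspec := Classical.choose_spec (eventually_atTop.mp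
      ((hT.eventually (eventually_lt_nhds hneg)).and (eventually_gt_atTop 0)))
    obtain ⟨hlt, ht0⟩ := hspec t (le_of_lt ht)
    have hD : (0:ℝ) < t ^ m.2 * exp (m.1 * t) := by positivity
    rw [← Finset.sum_div] at hlt
    have hmn := mul_neg_of_neg_of_pos hlt hD
    rwa [div_mul_cancel₀ _ (ne_of_gt hD)] at hmn
  · refine ⟨?_, ?_⟩
    case _ => exact Classical.choose (eventually_atTop.mp
      ((hT.eventually (eventually_gt_nhds hpos)).and (eventually_gt_atTop 0)))
    right; left
    intro t ht
    have hspec := Classical.choose_spec (eventually_atTop.mp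
      ((hT.eventually (eventually_gt_nhds hpos)).and (eventually_gt_atTop 0)))
    obtain ⟨hlt, ht0⟩ := hspec t (le_of_lt ht)
    have hD : (0:ℝ) < t ^ m.2 * exp (m.1 * t) := by positivity
    rw [← Finset.sum_div] at hlt
    have hmn := mul_pos hlt hD
    rwa [div_mul_cancel₀ _ (ne_of_gt hD)] at hmn

/-- Proposition 4: for a polynomial P in n+1 variables with real algebraic coefficients and
real algebraic numbers r₁,…,rₙ, the function t ↦ P(t, e^{r₁t},…,e^{rₙt}) is eventually
identically zero, eventually strictly positive, or eventually strictly negative. -/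
theorem exp_poly_eventual_sign_trichotomy
    (n : ℕ) (P : MvPolynomial (Fin (n + 1)) ℝ)
    (hP : ∀ d, IsAlgebraic ℚ (MvPolynomial.coeff d P))
    (r : Fin n → ℝ) (hr : ∀ j, IsAlgebraic ℚ (r j)) :
    ∃ T : ℝ,
      (∀ t > T, MvPolynomial.eval (Fin.cons t fun j => Real.exp (r j * t)) P = 0) ∨
      (∀ t > T, 0 < MvPolynomial.eval (Fin.cons t fun j => Real.exp (r j * t)) P) ∨
      (∀ t > T, MvPolynomial.eval (Fin.cons t fun j => Real.exp (r j * t)) P < 0) := by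
  classical
  set c : (ℝ × ℕ) →₀ ℝ :=
    ∑ d ∈ P.support,
      Finsupp.single ((∑ j : Fin n, (d j.succ : ℝ) * r j), d 0) (MvPolynomial.coeff d P)
    with hc
  have heval : ∀ t : ℝ,
      MvPolynomial.eval (Fin.cons t fun j => Real.exp (r j * t)) P
        = ∑ p ∈ c.support, c p * (t ^ p.2 * Real.exp (p.1 * t)) := by
    intro t
    have hlc : ∑ p ∈ c.support, c p * (t ^ p.2 * Real.exp (p.1 * t))
        = Finsupp.linearCombination ℝ (fun p : ℝ × ℕ => t ^ p.2 * Real.exp (p.1 * t)) c := by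
      rw [Finsupp.linearCombination_apply, Finsupp.sum]
      simp [smul_eq_mul]
    rw [hlc, hc, map_sum, MvPolynomial.eval_eq']
    refine Finset.sum_congr rfl fun d hd => ?_
    rw [Finsupp.linearCombination_single, smul_eq_mul]
    congr 1
    rw [Fin.prod_univ_succ]
    simp only [Fin.cons_zero, Fin.cons_succ]
    congr 1
    have : ∀ j : Fin n, Real.exp (r j * t) ^ d j.succ = Real.exp ((d j.succ : ℝ) * (r j * t)) :=
      fun j => (Real.exp_nat_mul _ _).symm
    rw [Finset.prod_congr rfl (fun j _ => this j), ← Real.exp_sum]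
    congr 1
    rw [Finset.sum_mul]
    exact Finset.sum_congr rfl fun j _ => by ring
  obtain ⟨T, h⟩ := exp_poly_key c
  refine ⟨T, ?_⟩
  simpa only [heval] using h
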